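/- For all s, t ∈ [0,1] one has s·t + Σ_{n=1}^{∞} Σ_{k odd, k ≤ 2^n} S_{k,n}(s)·S_{k,n}(t) = min{s,t}, where the double series converges absolutely. -/

import Mathlib

open MeasureTheory Set Filter

/-- The Haar function `h_{k,n}` (for `n ≥ 1`, `k` odd, `k ≤ 2ⁿ`): it equals `2^{(n-1)/2}` on
`((k-1)·2⁻ⁿ, k·2⁻ⁿ]`, `−2^{(n-1)/2}` on `(k·2⁻ⁿ, (k+1)·2⁻ⁿ]`, and `0` otherwise. -/
noncomputable def haarFn (k n : ℕ) : ℝ → ℝ := fun t =>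
  if ((k : ℝ) - 1) / 2 ^ n < t ∧ t ≤ (k : ℝ) / 2 ^ n then (2 : ℝ) ^ (((n : ℝ) - 1) / 2)
  else if (k : ℝ) / 2 ^ n < t ∧ t ≤ ((k : ℝ) + 1) / 2 ^ n then -((2 : ℝ) ^ (((n : ℝ) - 1) / 2))
  else 0

/-- The Schauder function `S_{k,n}(t) = ∫₀ᵗ h_{k,n}(s) ds`. -/
noncomputable def schauderFn (k n : ℕ) (t : ℝ) : ℝ := ∫ s in (0 : ℝ)..t, haarFn k n s

/-- The odd indices `k ≤ 2ⁿ`. -/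
def oddKs (n : ℕ) : Finset ℕ := (Finset.range (2 ^ n + 1)).filter (fun k => k % 2 = 1)


lemma haarFn_eq (k n : ℕ) : haarFn k n = fun t =>
    (2:ℝ) ^ (((n:ℝ)-1)/2) *
      ((Set.Ioc (((k:ℝ)-1)/2^n) ((k:ℝ)/2^n)).indicator (fun _ => (1:ℝ)) t
        - (Set.Ioc ((k:ℝ)/2^n) (((k:ℝ)+1)/2^n)).indicator (fun _ => (1:ℝ)) t) := by
  funext u
  simp only [haarFn, Set.indicator, Set.mem_Ioc]
  split_ifs <;> simp_all <;> linarith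

lemma integral_indicator_Ioc (a b t : ℝ) (ht : 0 ≤ t) (ha : 0 ≤ a) :
    ∫ x in (0:ℝ)..t, (Set.Ioc a b).indicator (fun _ => (1:ℝ)) x = max 0 (min t b - a) := by
  rw [intervalIntegral.integral_of_le ht, MeasureTheory.integral_indicator measurableSet_Ioc]
  rw [MeasureTheory.Measure.restrict_restrict measurableSet_Ioc, MeasureTheory.setIntegral_const]
  rw [Set.Ioc_inter_Ioc, Real.volume_real_Ioc, smul_eq_mul, mul_one,
    max_eq_left ha, max_comm, min_comm b t]

lemma intervalIntegrable_indicator_Ioc (a b t : ℝ) :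
    IntervalIntegrable ((Set.Ioc a b).indicator (fun _ => (1:ℝ))) volume 0 t := by
  apply MeasureTheory.Integrable.intervalIntegrable
  rw [MeasureTheory.integrable_indicator_iff measurableSet_Ioc]
  exact MeasureTheory.integrableOn_const (by simp [Real.volume_Ioc])

lemma schauderFn_eq (k n : ℕ) (t : ℝ) (hk : 1 ≤ k) (ht : 0 ≤ t) :
    schauderFn k n t = (2:ℝ) ^ (((n:ℝ)-1)/2) *
      (max 0 (min t ((k:ℝ)/2^n) - ((k:ℝ)-1)/2^n) - max 0 (min t (((k:ℝ)+1)/2^n) - (k:ℝ)/2^n)) := by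
  have hk' : (0:ℝ) ≤ ((k:ℝ)-1)/2^n := by
    apply div_nonneg _ (by positivity)
    have : (1:ℝ) ≤ (k:ℝ) := by exact_mod_cast hk
    linarith
  have hk'' : (0:ℝ) ≤ (k:ℝ)/2^n := by positivity
  rw [schauderFn, haarFn_eq]
  rw [intervalIntegral.integral_const_mul]
  rw [intervalIntegral.integral_sub (intervalIntegrable_indicator_Ioc _ _ _)
    (intervalIntegrable_indicator_Ioc _ _ _)]
  rw [integral_indicator_Ioc _ _ _ ht hk', integral_indicator_Ioc _ _ _ ht hk'']

lemma schauderFn_support (k n : ℕ) (t : ℝ) (hk : 1 ≤ k) (ht : 0 ≤ t)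
    (h : schauderFn k n t ≠ 0) : (k:ℝ) - 1 < 2^n * t ∧ 2^n * t < (k:ℝ) + 1 := by
  have hp : (0:ℝ) < 2^n := by positivity
  rw [schauderFn_eq k n t hk ht] at h
  by_contra hc
  push_neg at hc
  apply h
  have hab : ((k:ℝ)-1)/2^n < (k:ℝ)/2^n := by apply div_lt_div_of_pos_right ?_ hp; linarith
  have hbd : ((k:ℝ))/2^n < ((k:ℝ)+1)/2^n := by apply div_lt_div_of_pos_right ?_ hp; linarith
  rcases le_or_gt (2^n * t) ((k:ℝ) - 1) with h1 | h1
  · have ht1 : t ≤ ((k:ℝ)-1)/2^n := by rw [le_div_iff₀ hp]; linarith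
    rw [min_eq_left (le_of_lt (lt_of_le_of_lt ht1 hab)),
      min_eq_left (le_of_lt (lt_of_le_of_lt ht1 (hab.trans hbd))),
      max_eq_left (by linarith), max_eq_left (by linarith)]
    ring
  · have h2 := hc h1
    have ht1 : ((k:ℝ)+1)/2^n ≤ t := by rw [div_le_iff₀ hp]; linarith
    rw [min_eq_right (le_trans (le_of_lt hbd) ht1),
      min_eq_right ht1,
      max_eq_right (by linarith), max_eq_right (by linarith)]
    have : (k:ℝ)/2^n - ((k:ℝ)-1)/2^n = ((k:ℝ)+1)/2^n - (k:ℝ)/2^n := by field_simp; ring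
    rw [this]
    ring

lemma schauderFn_abs_le (k n : ℕ) (t : ℝ) (hk : 1 ≤ k) (ht : 0 ≤ t) :
    |schauderFn k n t| ≤ (2:ℝ)^(((n:ℝ)-1)/2) * (1/2^n) := by
  have hp : (0:ℝ) < 2^n := by positivity
  have hc : (0:ℝ) < (2:ℝ)^(((n:ℝ)-1)/2) := Real.rpow_pos_of_pos two_pos _
  rw [schauderFn_eq k n t hk ht, abs_mul, abs_of_pos hc]
  apply mul_le_mul_of_nonneg_left _ (le_of_lt hc)
  have e1 : (k:ℝ)/2^n - ((k:ℝ)-1)/2^n = 1/2^n := by field_simp; ring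
  have e2 : ((k:ℝ)+1)/2^n - (k:ℝ)/2^n = 1/2^n := by field_simp; ring
  have h1 : max 0 (min t ((k:ℝ)/2^n) - ((k:ℝ)-1)/2^n) ≤ 1/2^n :=
    max_le (by positivity) (by have := min_le_right t ((k:ℝ)/2^n); linarith)
  have h2 : max 0 (min t (((k:ℝ)+1)/2^n) - (k:ℝ)/2^n) ≤ 1/2^n :=
    max_le (by positivity) (by have := min_le_right t (((k:ℝ)+1)/2^n); linarith)
  have h3 : (0:ℝ) ≤ max 0 (min t ((k:ℝ)/2^n) - ((k:ℝ)-1)/2^n) := le_max_left _ _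
  have h4 : (0:ℝ) ≤ max 0 (min t (((k:ℝ)+1)/2^n) - (k:ℝ)/2^n) := le_max_left _ _
  rw [abs_le]
  constructor <;> linarith

lemma prod_bound (k n : ℕ) (s t : ℝ) (hk : 1 ≤ k) (hn : 1 ≤ n) (hs : 0 ≤ s) (ht : 0 ≤ t) :
    |schauderFn k n s * schauderFn k n t| ≤ (1/2:ℝ)^(n+1) := by
  have hc : (0:ℝ) < (2:ℝ)^(((n:ℝ)-1)/2) := Real.rpow_pos_of_pos two_pos _
  have hb := mul_le_mul (schauderFn_abs_le k n s hk hs) (schauderFn_abs_le k n t hk ht)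
    (abs_nonneg _) (by positivity)
  rw [abs_mul]
  apply le_trans hb
  have hc2 : ((2:ℝ)^(((n:ℝ)-1)/2)) * ((2:ℝ)^(((n:ℝ)-1)/2)) = 2^(n-1:ℕ) := by
    rw [← Real.rpow_natCast 2 (n-1), ← Real.rpow_add two_pos]
    congr 1
    rw [Nat.cast_sub hn]
    ring
  have key : ((2:ℝ)^(((n:ℝ)-1)/2) * (1/2^n)) * ((2:ℝ)^(((n:ℝ)-1)/2) * (1/2^n))
      = (1/2:ℝ)^(n+1) := by
    have : ((2:ℝ)^(((n:ℝ)-1)/2) * (1/2^n)) * ((2:ℝ)^(((n:ℝ)-1)/2) * (1/2^n))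
        = (2:ℝ)^(n-1:ℕ) * (1/2^n) * (1/2^n) := by rw [← hc2]; ring
    rw [this, div_pow, one_pow]
    field_simp
    rw [← pow_mul, ← pow_add, show n - 1 + (n + 1) = n * 2 by omega]
  rw [key]

lemma uniq (n : ℕ) (s : ℝ) (hs : 0 ≤ s) {k₁ k₂ : ℕ} (h₁ : k₁ % 2 = 1) (h₂ : k₂ % 2 = 1)
    (hf₁ : schauderFn k₁ n s ≠ 0) (hf₂ : schauderFn k₂ n s ≠ 0) : k₁ = k₂ := by
  obtain ⟨a1, a2⟩ := schauderFn_support k₁ n s (by omega) hs hf₁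
  obtain ⟨b1, b2⟩ := schauderFn_support k₂ n s (by omega) hs hf₂
  have c1 : (k₁:ℝ) < k₂ + 2 := by linarith
  have c2 : (k₂:ℝ) < k₁ + 2 := by linarith
  have d1 : k₁ < k₂ + 2 := by exact_mod_cast c1
  have d2 : k₂ < k₁ + 2 := by exact_mod_cast c2
  omega

lemma sum_abs_le {F : Finset ℕ} {f : ℕ → ℝ} {c : ℝ} (hc : 0 ≤ c)
    (hb : ∀ k ∈ F, |f k| ≤ c)
    (hu : ∀ k₁ ∈ F, ∀ k₂ ∈ F, f k₁ ≠ 0 → f k₂ ≠ 0 → k₁ = k₂) :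
    ∑ k ∈ F, |f k| ≤ c := by
  by_cases he : ∀ k ∈ F, f k = 0
  · rw [Finset.sum_eq_zero (fun k hk => by rw [he k hk, abs_zero])]; exact hc
  · push_neg at he
    obtain ⟨k₀, hk₀, hfk₀⟩ := he
    rw [Finset.sum_eq_single_of_mem k₀ hk₀ ?_]
    · exact hb k₀ hk₀
    · intro b hbF hne
      rcases eq_or_ne (f b) 0 with h|h
      · rw [h, abs_zero]
      · exact absurd (hu b hbF k₀ hk₀ h hfk₀) hne

lemma level_bound (n : ℕ) (s t : ℝ) (hs : 0 ≤ s) (ht : 0 ≤ t) (hn : 1 ≤ n) :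
    ∑ k ∈ oddKs n, |schauderFn k n s * schauderFn k n t| ≤ (1/2:ℝ)^(n+1) := by
  apply sum_abs_le (by positivity)
  · intro k hk
    have hk1 : k % 2 = 1 := (Finset.mem_filter.1 hk).2
    exact prod_bound k n s t (by omega) hn hs ht
  · intro k₁ hk₁ k₂ hk₂ h1 h2
    have e₁ : k₁ % 2 = 1 := (Finset.mem_filter.1 hk₁).2
    have e₂ : k₂ % 2 = 1 := (Finset.mem_filter.1 hk₂).2
    exact uniq n s hs e₁ e₂ (left_ne_zero_of_mul h1) (left_ne_zero_of_mul h2)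

noncomputable def jj (N : ℕ) (s : ℝ) : ℕ := min (⌊(2:ℝ)^N * s⌋.toNat) (2^N - 1)

noncomputable def ff (N : ℕ) (s t : ℝ) : ℝ :=
  ((jj N s : ℝ) + ((2:ℝ)^N * s - jj N s) * (min ((2:ℝ)^N * t) ((jj N s : ℝ) + 1) - jj N s)) / 2^N

lemma jj_top (N : ℕ) (s : ℝ) : jj N s ≤ 2^N - 1 := min_le_right _ _

lemma jj_lb (N : ℕ) (s : ℝ) (hs0 : 0 ≤ s) (hs1 : s ≤ 1) : (jj N s : ℝ) ≤ 2^N * s := by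
  have hx0 : (0:ℝ) ≤ 2^N * s := by positivity
  have hfl : (0:ℤ) ≤ ⌊(2:ℝ)^N * s⌋ := Int.floor_nonneg.2 hx0
  rcases le_or_gt (⌊(2:ℝ)^N * s⌋.toNat) (2^N - 1) with h | h
  · rw [jj, min_eq_left h]
    calc ((⌊(2:ℝ)^N * s⌋.toNat : ℕ) : ℝ) = (⌊(2:ℝ)^N * s⌋ : ℝ) := by
          rw [← Int.cast_natCast, Int.toNat_of_nonneg hfl]
      _ ≤ 2^N * s := Int.floor_le _
  · rw [jj, min_eq_right (le_of_lt h)]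
    have h2 : (2:ℕ)^N ≤ ⌊(2:ℝ)^N * s⌋.toNat := by omega
    have h3 : ((2:ℕ)^N : ℝ) ≤ 2^N * s := by
      calc ((2:ℕ)^N : ℝ) ≤ ((⌊(2:ℝ)^N * s⌋.toNat : ℕ) : ℝ) := by exact_mod_cast h2
        _ = (⌊(2:ℝ)^N * s⌋ : ℝ) := by rw [← Int.cast_natCast, Int.toNat_of_nonneg hfl]
        _ ≤ 2^N * s := Int.floor_le _
    have h4 : ((2^N - 1 : ℕ) : ℝ) = 2^N - 1 := by
      rw [Nat.cast_sub (Nat.one_le_two_pow)]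
      push_cast; ring
    rw [h4]
    push_cast at h3
    linarith

lemma jj_ub (N : ℕ) (s : ℝ) (hs0 : 0 ≤ s) (hs1 : s ≤ 1) : (2:ℝ)^N * s ≤ (jj N s : ℝ) + 1 := by
  have hx0 : (0:ℝ) ≤ 2^N * s := by positivity
  have hfl : (0:ℤ) ≤ ⌊(2:ℝ)^N * s⌋ := Int.floor_nonneg.2 hx0
  rcases le_or_gt (⌊(2:ℝ)^N * s⌋.toNat) (2^N - 1) with h | h
  · rw [jj, min_eq_left h]
    have := Int.lt_floor_add_one ((2:ℝ)^N * s)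
    have e : ((⌊(2:ℝ)^N * s⌋.toNat : ℕ) : ℝ) = (⌊(2:ℝ)^N * s⌋ : ℝ) := by
      rw [← Int.cast_natCast, Int.toNat_of_nonneg hfl]
    rw [e]; linarith
  · rw [jj, min_eq_right (le_of_lt h)]
    have h4 : ((2^N - 1 : ℕ) : ℝ) = 2^N - 1 := by
      rw [Nat.cast_sub (Nat.one_le_two_pow)]
      push_cast; ring
    rw [h4]
    have : (2:ℝ)^N * s ≤ 2^N := by nlinarith [pow_pos (show (0:ℝ) < 2 by norm_num) N]
    linarith

lemma jj_mono (N : ℕ) (s : ℝ) (hs0 : 0 ≤ s) (hs1 : s ≤ 1) : 2 * jj N s ≤ jj (N+1) s := by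
  have hlb := jj_lb N s hs0 hs1
  have h1 : ((2 * jj N s : ℕ) : ℝ) ≤ (2:ℝ)^(N+1) * s := by
    push_cast
    have : (2:ℝ)^(N+1) = 2 * 2^N := by ring
    rw [this]; linarith
  have h2 : (2 * jj N s : ℤ) ≤ ⌊(2:ℝ)^(N+1) * s⌋ := by
    apply Int.le_floor.2
    exact_mod_cast h1
  have h3 : 2 * jj N s ≤ ⌊(2:ℝ)^(N+1) * s⌋.toNat := by omega
  have h4 : 2 * jj N s ≤ 2^(N+1) - 1 := by
    have := jj_top N s
    have e : (2:ℕ)^(N+1) = 2 * 2^N := by rw [pow_succ]; ring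
    omega
  exact le_min h3 h4

set_option maxHeartbeats 2000000 in
lemma helper (P J J' s t cc : ℝ) (hP : 0 < P)
    (hcc : cc * cc = P/2)
    (hJ0 : 0 ≤ J)
    (h1 : 2*J ≤ P*s) (h2 : P*s ≤ 2*J+2)
    (h3 : J' ≤ P*s) (h4 : P*s ≤ J'+1)
    (hdisc : J' = 2*J ∨ J' = 2*J+1 ∨ J' = 2*J+2)
    (hst : s ≤ t) :
    (cc * (max 0 (min s ((2*J+1)/P) - (2*J+1-1)/P) - max 0 (min s ((2*J+1+1)/P) - (2*J+1)/P))) *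
    (cc * (max 0 (min t ((2*J+1)/P) - (2*J+1-1)/P) - max 0 (min t ((2*J+1+1)/P) - (2*J+1)/P)))
    = (J' + (P*s - J')*(min (P*t) (J'+1) - J'))/P
      - (2*J + (P*s - 2*J)*(min (P*t) (2*J+2) - 2*J)/2)/P := by
  have hPne : P ≠ 0 := ne_of_gt hP
  have hPst : P * s ≤ P * t := mul_le_mul_of_nonneg_left hst (le_of_lt hP)
  have key : ∀ X Y : ℝ, (cc * X) * (cc * Y) = (P/2) * (X * Y) := by
    intro X Y; rw [← hcc]; ring
  rw [key]
  rw [show (2*J+1-1 : ℝ) = 2*J from by ring, show (2*J+1+1 : ℝ) = 2*J+2 from by ring]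
  have ms : ∀ u q : ℝ, min u (q/P) = min (P*u) q / P := by
    intro u q
    rw [← min_div_div_right (le_of_lt hP) (P*u) q, mul_div_cancel_left₀ _ hPne]
  have mx : ∀ w v : ℝ, max 0 (w/P - v/P) = max 0 (w - v) / P := by
    intro w v
    rw [div_sub_div_same, ← max_div_div_right (le_of_lt hP) 0 (w - v), zero_div]
  rw [ms s (2*J+1), ms s (2*J+2), ms t (2*J+1), ms t (2*J+2), mx, mx, mx, mx]
  rcases le_or_gt (2*J+2) (P*t) with hy | hy
  · rw [min_eq_right (show (2*J+1:ℝ) ≤ P*t by linarith),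
      min_eq_right (show (2*J+2:ℝ) ≤ P*t by linarith)]
    rw [max_eq_right (show (0:ℝ) ≤ 2*J+1 - 2*J by linarith),
      max_eq_right (show (0:ℝ) ≤ 2*J+2 - (2*J+1) by linarith)]
    rcases le_or_gt (J'+1) (P*t) with hy2 | hy2
    · rw [min_eq_right hy2]; field_simp; ring
    · have hJ' : J' = 2*J+2 := by
        rcases hdisc with h|h|h
        · linarith
        · linarith
        · exact h
      have hx' : P*s = J' := le_antisymm (by linarith) h3
      rw [min_eq_left (show P*t ≤ J'+1 by linarith), hx', hJ']
      field_simp; ring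
  · have hx2 : P*s < 2*J+2 := lt_of_le_of_lt hPst hy
    rw [min_eq_left (show P*t ≤ 2*J+2 by linarith),
      min_eq_left (show P*s ≤ 2*J+2 by linarith)]
    rcases hdisc with hJ' | hJ' | hJ'
    · have hx1 : P*s ≤ 2*J+1 := by rw [hJ'] at h4; linarith
      rw [min_eq_left hx1]
      rw [max_eq_right (show (0:ℝ) ≤ P*s - 2*J by linarith)]
      rw [max_eq_left (show P*s - (2*J+1) ≤ 0 by linarith)]
      rw [hJ']
      rcases le_or_gt (P*t) (2*J+1) with hy1 | hy1
      · rw [min_eq_left hy1]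
        rw [max_eq_right (show (0:ℝ) ≤ P*t - 2*J by linarith)]
        rw [max_eq_left (show P*t - (2*J+1) ≤ 0 by linarith)]
        field_simp; ring
      · rw [min_eq_right (show (2*J+1:ℝ) ≤ P*t by linarith)]
        rw [max_eq_right (show (0:ℝ) ≤ 2*J+1 - 2*J by linarith)]
        rw [max_eq_right (show (0:ℝ) ≤ P*t - (2*J+1) by linarith)]
        field_simp; ring
    · have hx1 : 2*J+1 ≤ P*s := by rw [hJ'] at h3; linarith
      rw [min_eq_right (show (2*J+1:ℝ) ≤ P*s by linarith),
        min_eq_right (show (2*J+1:ℝ) ≤ P*t by linarith)]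
      rw [max_eq_right (show (0:ℝ) ≤ 2*J+1 - 2*J by linarith)]
      rw [max_eq_right (show (0:ℝ) ≤ P*s - (2*J+1) by linarith)]
      rw [max_eq_right (show (0:ℝ) ≤ P*t - (2*J+1) by linarith)]
      rw [hJ', show ((2*J+1:ℝ)+1) = 2*J+2 from by ring]
      rw [min_eq_left (show P*t ≤ 2*J+2 by linarith)]
      field_simp; ring
    · exfalso; linarith

lemma sum_level (N : ℕ) (s t : ℝ) (hs0 : 0 ≤ s) (hs1 : s ≤ 1) (ht0 : 0 ≤ t) (ht1 : t ≤ 1)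
    (hst : s ≤ t) :
    ∑ k ∈ oddKs (N+1), schauderFn k (N+1) s * schauderFn k (N+1) t
      = ff (N+1) s t - ff N s t := by
  have hlbN := jj_lb N s hs0 hs1
  have hubN := jj_ub N s hs0 hs1
  have hlbN1 := jj_lb (N+1) s hs0 hs1
  have hubN1 := jj_ub (N+1) s hs0 hs1
  have hmono := jj_mono N s hs0 hs1
  have hpow : (2:ℝ)^(N+1) = 2*2^N := by ring
  have d1 : 2*(jj N s : ℝ) ≤ 2^(N+1)*s := by rw [hpow]; linarith
  have d2 : (2:ℝ)^(N+1)*s ≤ 2*(jj N s : ℝ)+2 := by rw [hpow]; linarith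
  have hmono' : 2*(jj N s : ℝ) ≤ (jj (N+1) s : ℝ) := by exact_mod_cast hmono
  have hub2 : jj (N+1) s ≤ 2*jj N s + 2 := by
    have h' : ((jj (N+1) s : ℕ):ℝ) ≤ ((2*jj N s + 2 : ℕ):ℝ) := by push_cast; linarith
    exact_mod_cast h'
  have hside : ∀ k ∈ oddKs (N+1), k ≠ 2 * jj N s + 1 →
      schauderFn k (N+1) s * schauderFn k (N+1) t = 0 := by
    intro k hk hne
    rcases eq_or_ne (schauderFn k (N+1) s) 0 with h|h
    · rw [h, zero_mul]
    · exfalso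
      have hk1 : k % 2 = 1 := (Finset.mem_filter.1 hk).2
      obtain ⟨c1, c2⟩ := schauderFn_support k (N+1) s (by omega) hs0 h
      have e1 : (k:ℝ) < 2*(jj N s:ℝ) + 3 := by linarith
      have e2 : 2*(jj N s:ℝ) < (k:ℝ) + 1 := by linarith
      have f1 : k < 2*jj N s + 3 := by exact_mod_cast e1
      have f2 : 2*jj N s < k + 1 := by
        have : ((2*jj N s : ℕ):ℝ) < (k:ℝ) + 1 := by push_cast; linarith
        exact_mod_cast this
      omega
  have hmem : 2 * jj N s + 1 ∈ oddKs (N+1) := by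
    rw [oddKs, Finset.mem_filter, Finset.mem_range]
    refine ⟨?_, by omega⟩
    have := jj_top N s
    have e : (2:ℕ)^(N+1) = 2*2^N := by rw [pow_succ]; ring
    have h1 : (1:ℕ) ≤ 2^N := Nat.one_le_two_pow
    omega
  rw [Finset.sum_eq_single_of_mem _ hmem hside]
  rw [schauderFn_eq _ (N+1) s (by omega) hs0, schauderFn_eq _ (N+1) t (by omega) ht0]
  have hca : ((2 * jj N s + 1 : ℕ):ℝ) = 2*(jj N s:ℝ)+1 := by push_cast; ring
  rw [hca]
  set cc := (2:ℝ)^(((((N+1:ℕ)):ℝ)-1)/2) with hcc_def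
  have hcc : cc * cc = (2:ℝ)^(N+1)/2 := by
    rw [hcc_def, ← Real.rpow_add two_pos]
    have e : ((((N+1:ℕ)):ℝ)-1)/2 + ((((N+1:ℕ)):ℝ)-1)/2 = (N:ℝ) := by push_cast; ring
    rw [e, Real.rpow_natCast, hpow]
    ring
  have hdisc : ((jj (N+1) s:ℕ):ℝ) = 2*(jj N s:ℝ) ∨ ((jj (N+1) s:ℕ):ℝ) = 2*(jj N s:ℝ)+1 ∨
      ((jj (N+1) s:ℕ):ℝ) = 2*(jj N s:ℝ)+2 := by
    have h' : jj (N+1) s = 2*jj N s ∨ jj (N+1) s = 2*jj N s + 1 ∨ jj (N+1) s = 2*jj N s + 2 := by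
      omega
    rcases h' with h|h|h
    · left; rw [h]; push_cast; ring
    · right; left; rw [h]; push_cast; ring
    · right; right; rw [h]; push_cast; ring
  have hffN : ff N s t = (2*(jj N s:ℝ) + ((2:ℝ)^(N+1)*s - 2*(jj N s:ℝ)) *
      (min ((2:ℝ)^(N+1)*t) (2*(jj N s:ℝ)+2) - 2*(jj N s:ℝ))/2)/2^(N+1) := by
    simp only [ff]
    have hmin : min ((2:ℝ)^(N+1)*t) (2*(jj N s:ℝ)+2) = 2 * min ((2:ℝ)^N*t) ((jj N s:ℝ)+1) := by
      rw [hpow, show (2*2^N*t:ℝ) = 2*((2:ℝ)^N*t) from by ring,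
        show (2*(jj N s:ℝ)+2) = 2*((jj N s:ℝ)+1) from by ring,
        ← mul_min_of_nonneg _ _ (by norm_num : (0:ℝ) ≤ 2)]
    rw [hmin, hpow]
    have h2N : (2:ℝ)^N ≠ 0 := by positivity
    field_simp
  rw [hffN]
  simp only [ff]
  exact helper (2^(N+1)) (jj N s:ℝ) (jj (N+1) s:ℝ) s t cc (by positivity) hcc (by positivity)
    d1 d2 hlbN1 hubN1 hdisc hst

lemma ff0 (s t : ℝ) (ht1 : t ≤ 1) : ff 0 s t = s * t := by
  have hj : jj 0 s = 0 := by rw [jj]; simp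
  simp [ff, hj, min_eq_left ht1]

lemma ff_close (N : ℕ) (s t : ℝ) (hs0 : 0 ≤ s) (hs1 : s ≤ 1) (hst : s ≤ t) :
    |ff N s t - s| ≤ (1/2:ℝ)^N := by
  have hp : (0:ℝ) < 2^N := by positivity
  have hlb := jj_lb N s hs0 hs1
  have hub := jj_ub N s hs0 hs1
  have hmt : (jj N s:ℝ) ≤ min ((2:ℝ)^N*t) ((jj N s:ℝ)+1) := by
    apply le_min _ (by linarith)
    have h' : (2:ℝ)^N*s ≤ (2:ℝ)^N*t := by nlinarith
    linarith
  have hmt2 : min ((2:ℝ)^N*t) ((jj N s:ℝ)+1) ≤ (jj N s:ℝ)+1 := min_le_right _ _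
  have key : ff N s t - s = (((2:ℝ)^N*s - jj N s) *
      ((min ((2:ℝ)^N*t) ((jj N s:ℝ)+1) - jj N s) - 1))/2^N := by
    rw [ff]; field_simp; ring
  rw [key, abs_div, abs_of_pos hp, abs_mul]
  have b1 : |(2:ℝ)^N*s - (jj N s:ℝ)| ≤ 1 := abs_le.2 ⟨by linarith, by linarith⟩
  have b2 : |(min ((2:ℝ)^N*t) ((jj N s:ℝ)+1) - (jj N s:ℝ)) - 1| ≤ 1 :=
    abs_le.2 ⟨by linarith, by linarith⟩
  have e : (1/2:ℝ)^N = 1/2^N := by rw [div_pow, one_pow]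
  rw [e]
  have hb : |(2:ℝ)^N*s - (jj N s:ℝ)| * |(min ((2:ℝ)^N*t) ((jj N s:ℝ)+1) - (jj N s:ℝ)) - 1| ≤ 1 := by
    nlinarith [abs_nonneg ((2:ℝ)^N*s - (jj N s:ℝ)),
      abs_nonneg ((min ((2:ℝ)^N*t) ((jj N s:ℝ)+1) - (jj N s:ℝ)) - 1)]
  exact div_le_div_of_nonneg_right hb (le_of_lt hp)

lemma partial_sum (s t : ℝ) (hs0 : 0 ≤ s) (hs1 : s ≤ 1) (ht0 : 0 ≤ t) (ht1 : t ≤ 1)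
    (hst : s ≤ t) (N : ℕ) :
    s*t + ∑ n ∈ Finset.range N, (∑ k ∈ oddKs (n+1), schauderFn k (n+1) s * schauderFn k (n+1) t)
      = ff N s t := by
  induction N with
  | zero => simp [ff0 s t ht1]
  | succ N ih =>
    rw [Finset.sum_range_succ, sum_level N s t hs0 hs1 ht0 ht1 hst]
    linarith

lemma main_le (s t : ℝ) (hs : s ∈ Set.Icc (0 : ℝ) 1) (ht : t ∈ Set.Icc (0 : ℝ) 1) (hst : s ≤ t) :
    Summable (fun n : ℕ =>
      ∑ k ∈ oddKs (n + 1), |schauderFn k (n + 1) s * schauderFn k (n + 1) t|) ∧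
    s * t + ∑' n : ℕ, ∑ k ∈ oddKs (n + 1), schauderFn k (n + 1) s * schauderFn k (n + 1) t
      = min s t := by
  obtain ⟨hs0, hs1⟩ := hs
  obtain ⟨ht0, ht1⟩ := ht
  have habs : Summable (fun n : ℕ =>
      ∑ k ∈ oddKs (n + 1), |schauderFn k (n + 1) s * schauderFn k (n + 1) t|) := by
    apply Summable.of_nonneg_of_le (fun n => Finset.sum_nonneg fun k _ => abs_nonneg _)
      (fun n => level_bound (n+1) s t hs0 ht0 (by omega))
    have h' : Summable (fun n : ℕ => (1/2:ℝ)^n * (1/2)^2) := summable_geometric_two.mul_right _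
    exact h'.congr (fun n => by rw [← pow_add])
  refine ⟨habs, ?_⟩
  have hsummable : Summable (fun n : ℕ =>
      ∑ k ∈ oddKs (n + 1), schauderFn k (n + 1) s * schauderFn k (n + 1) t) := by
    apply Summable.of_norm_bounded habs
    intro n
    rw [Real.norm_eq_abs]
    exact Finset.abs_sum_le_sum_abs _ _
  have htend1 : Tendsto (fun N => s*t + ∑ n ∈ Finset.range N,
      ∑ k ∈ oddKs (n+1), schauderFn k (n+1) s * schauderFn k (n+1) t) atTop
      (nhds (s*t + ∑' n : ℕ, ∑ k ∈ oddKs (n+1), schauderFn k (n+1) s * schauderFn k (n+1) t)) :=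
    (hsummable.hasSum.tendsto_sum_nat).const_add (s*t)
  have htend2 : Tendsto (fun N => ff N s t) atTop (nhds s) := by
    have h0 : Tendsto (fun N : ℕ => (1/2:ℝ)^N) atTop (nhds 0) :=
      tendsto_pow_atTop_nhds_zero_of_lt_one (by norm_num) (by norm_num)
    rw [tendsto_iff_dist_tendsto_zero]
    apply squeeze_zero (fun n => dist_nonneg) _ h0
    intro n
    rw [Real.dist_eq]
    exact ff_close n s t hs0 hs1 hst
  have htend2' : Tendsto (fun N => s*t + ∑ n ∈ Finset.range N,
      ∑ k ∈ oddKs (n+1), schauderFn k (n+1) s * schauderFn k (n+1) t) atTop (nhds s) := by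
    apply Tendsto.congr _ htend2
    intro N
    exact (partial_sum s t hs0 hs1 ht0 ht1 hst N).symm
  have heq := tendsto_nhds_unique htend1 htend2'
  rw [min_eq_left hst]
  exact heq

/-- Parseval identity for the Haar system: for all `s, t ∈ [0,1]`,
`s·t + Σ_{n≥1} Σ_{k odd, k ≤ 2ⁿ} S_{k,n}(s)·S_{k,n}(t) = min{s,t}`, the double series
converging absolutely. -/
theorem schauder_parseval (s t : ℝ) (hs : s ∈ Set.Icc (0 : ℝ) 1) (ht : t ∈ Set.Icc (0 : ℝ) 1) :
    Summable (fun n : ℕ =>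
      ∑ k ∈ oddKs (n + 1), |schauderFn k (n + 1) s * schauderFn k (n + 1) t|) ∧
    s * t + ∑' n : ℕ, ∑ k ∈ oddKs (n + 1), schauderFn k (n + 1) s * schauderFn k (n + 1) t
      = min s t := by
  rcases le_total s t with h | h
  · exact main_le s t hs ht h
  · obtain ⟨h1, h2⟩ := main_le t s ht hs h
    have e1 : (fun n : ℕ => ∑ k ∈ oddKs (n+1), |schauderFn k (n+1) s * schauderFn k (n+1) t|)
        = (fun n : ℕ => ∑ k ∈ oddKs (n+1), |schauderFn k (n+1) t * schauderFn k (n+1) s|) := by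
      funext n
      exact Finset.sum_congr rfl (fun k _ => by rw [mul_comm])
    have e2 : (fun n : ℕ => ∑ k ∈ oddKs (n+1), schauderFn k (n+1) s * schauderFn k (n+1) t)
        = (fun n : ℕ => ∑ k ∈ oddKs (n+1), schauderFn k (n+1) t * schauderFn k (n+1) s) := by
      funext n
      exact Finset.sum_congr rfl (fun k _ => by rw [mul_comm])
    refine ⟨by rw [e1]; exact h1, ?_⟩
    rw [show (∑' n : ℕ, ∑ k ∈ oddKs (n+1), schauderFn k (n+1) s * schauderFn k (n+1) t)
      = ∑' n : ℕ, ∑ k ∈ oddKs (n+1), schauderFn k (n+1) t * schauderFn k (n+1) s from by rw [e2]]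
    rw [min_comm, mul_comm]
    exact h2
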